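/- Let n ≥ 1 and let v₁, …, vₙ ∈ ℂ⁴ be vectors whose first coordinate is 0. Then vⱼᵗ I_{1,3} v_l = 0 for all 1 ≤ j, l ≤ n if and only if there exist a vector w ∈ ℂ⁴ and scalars g₁, …, gₙ ∈ ℂ with vⱼ = gⱼ·w for all j, where w is either of the form (0, 2g₀, 1 − g₀², i(1 + g₀²)) for some g₀ ∈ ℂ or equals (0, 0, 1, −i). -/

import Mathlib

open Matrix

noncomputable section

/-- `I_{1,3} = diag(−1,1,1,1)`. -/
def I13 : Matrix (Fin 4) (Fin 4) ℂ :=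
  !![-1, 0, 0, 0;
     0, 1, 0, 0;
     0, 0, 1, 0;
     0, 0, 0, 1]

/-- The bilinear form `(v, w) ↦ vᵗ I_{1,3} w` on `ℂ⁴`. -/
def bform (v w : Fin 4 → ℂ) : ℂ := v ⬝ᵥ I13.mulVec w


lemma bform_eq (v w : Fin 4 → ℂ) :
    bform v w = -(v 0 * w 0) + v 1 * w 1 + v 2 * w 2 + v 3 * w 3 := by
  simp [bform, I13, Matrix.mulVec, dotProduct, Fin.sum_univ_four,
    Matrix.vecHead, Matrix.vecTail]

lemma collinear (a b c d e f : ℂ)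
    (hu : a^2+b^2+c^2 = 0) (hv2 : d^2+e^2+f^2 = 0) (huv : a*d+b*e+c*f = 0)
    (hne : ¬(a = 0 ∧ b = 0 ∧ c = 0)) :
    ∃ l : ℂ, d = l*a ∧ e = l*b ∧ f = l*c := by
  have hI : Complex.I^2 = -1 := Complex.I_sq
  by_cases hs : b - Complex.I*c = 0
  · have ha : a = 0 := by
      have h2 : a^2 = 0 := by linear_combination hu - (b + Complex.I*c)*hs - c^2*hI
      exact pow_eq_zero_iff (by norm_num) |>.mp h2
    have hb : b ≠ 0 := by
      intro hb0
      refine hne ⟨ha, hb0, ?_⟩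
      have h' := hs; rw [hb0] at h'
      have h'' : Complex.I * c = 0 := by linear_combination -h'
      exact (mul_eq_zero.mp h'').resolve_left Complex.I_ne_zero
    have ht : e - Complex.I*f = 0 := by
      have h1 : b*(e - Complex.I*f) = 0 := by
        linear_combination huv - d*ha - Complex.I*f*hs - c*f*hI
      exact (mul_eq_zero.mp h1).resolve_left hb
    have hd : d = 0 := by
      have h2 : d^2 = 0 := by
        linear_combination hv2 - (e + Complex.I*f)*ht - f^2*hI
      exact pow_eq_zero_iff (by norm_num) |>.mp h2
    refine ⟨e/b, by rw [ha, mul_zero]; exact hd, by field_simp, ?_⟩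
    field_simp
    linear_combination f*hs - c*ht
  · -- main case : s = b - I c ≠ 0
    set s := b - Complex.I*c with hs_def
    set t := e - Complex.I*f with ht_def
    have key1 : a*t - s*d = 0 := by
      have h2 : (a*t - s*d)^2 = 0 := by
        linear_combination t^2*hu + s^2*hv2 - 2*s*t*huv - (b*f-c*e)^2*hI
      exact pow_eq_zero_iff (by norm_num) |>.mp h2
    have key2 : s*(e+Complex.I*f) - t*(b+Complex.I*c) = 0 := by
      have h3 : s*(s*(e+Complex.I*f) - t*(b+Complex.I*c)) = 0 := by
        linear_combination -2*t*hu + 2*s*huv + 2*a*key1 + (2*t*c^2 - 2*s*c*f)*hI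
      exact (mul_eq_zero.mp h3).resolve_left hs
    refine ⟨t/s, ?_, ?_, ?_⟩
    · field_simp
      linear_combination -key1
    · field_simp
      linear_combination (1/2 : ℂ)*key2
    · field_simp
      linear_combination (-Complex.I/2 : ℂ)*key2 + ((b-Complex.I*c)*f-(e-Complex.I*f)*c)*hI


lemma normalize13 (a b c : ℂ) (hu : a^2+b^2+c^2 = 0) :
    ∃ (μ : ℂ) (w : Fin 4 → ℂ),
      ((∃ g0 : ℂ, w = ![0, 2 * g0, 1 - g0 ^ 2, Complex.I * (1 + g0 ^ 2)]) ∨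
        w = ![0, 0, 1, -Complex.I]) ∧
      w 0 = 0 ∧ a = μ * w 1 ∧ b = μ * w 2 ∧ c = μ * w 3 := by
  have hI : Complex.I^2 = -1 := Complex.I_sq
  by_cases hs : b - Complex.I*c = 0
  · -- then a = 0, c = -I b : take μ = b, w = (0,0,1,-I)
    have ha : a = 0 := by
      have h2 : a^2 = 0 := by linear_combination hu - (b + Complex.I*c)*hs - c^2*hI
      exact pow_eq_zero_iff (by norm_num) |>.mp h2
    refine ⟨b, ![0, 0, 1, -Complex.I], Or.inr rfl, rfl, ?_, ?_, ?_⟩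
    · simpa using ha
    · simp
    · show c = b * (-Complex.I)
      linear_combination Complex.I*hs + c*hI
  · set s := b - Complex.I*c with hs_def
    refine ⟨s/2, ![0, 2 * (a/s), 1 - (a/s) ^ 2, Complex.I * (1 + (a/s) ^ 2)],
      Or.inl ⟨a/s, rfl⟩, rfl, ?_, ?_, ?_⟩
    · show a = s/2 * (2 * (a/s))
      field_simp
    · show b = s/2 * (1 - (a/s)^2)
      field_simp
      linear_combination hu - c^2*hI
    · show c = s/2 * (Complex.I * (1 + (a/s)^2))
      field_simp
      linear_combination -Complex.I*hu + (2*b*c - Complex.I*c^2)*hI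

/-- vectors `v₁, …, vₙ ∈ ℂ⁴` with vanishing first coordinate are pairwise
isotropic for `I_{1,3}` iff they are all multiples of a single vector of the form
`(0, 2g₀, 1 − g₀², i(1 + g₀²))` or of `(0, 0, 1, −i)`. -/
theorem stmt10 (n : ℕ) (hn : 1 ≤ n) (v : Fin n → (Fin 4 → ℂ)) (hv : ∀ j, v j 0 = 0) :
    (∀ j l, bform (v j) (v l) = 0) ↔
      ∃ (w : Fin 4 → ℂ) (g : Fin n → ℂ),
        (∀ j, v j = g j • w) ∧
        ((∃ g0 : ℂ, w = ![0, 2 * g0, 1 - g0 ^ 2, Complex.I * (1 + g0 ^ 2)]) ∨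
          w = ![0, 0, 1, -Complex.I]) := by
  constructor
  · intro h
    have hb : ∀ j l, v j 1 * v l 1 + v j 2 * v l 2 + v j 3 * v l 3 = 0 := by
      intro j l
      have h2 := h j l
      rw [bform_eq, hv j] at h2
      linear_combination h2
    by_cases hz : ∀ j, v j = 0
    · exact ⟨![0, 0, 1, -Complex.I], 0, fun j => by rw [hz j]; simp, Or.inr rfl⟩
    · push_neg at hz
      obtain ⟨j0, hj0⟩ := hz
      have hne : ¬(v j0 1 = 0 ∧ v j0 2 = 0 ∧ v j0 3 = 0) := by
        rintro ⟨h1, h2, h3⟩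
        apply hj0
        funext i
        fin_cases i
        · exact hv j0
        · exact h1
        · exact h2
        · exact h3
      have hq : ∀ j, (v j 1)^2 + (v j 2)^2 + (v j 3)^2 = 0 := fun j => by
        linear_combination hb j j
      obtain ⟨μ, w, hwform, hw0, h1, h2, h3⟩ := normalize13 _ _ _ (hq j0)
      have hcol : ∀ l, ∃ lam : ℂ, v l 1 = lam * v j0 1 ∧ v l 2 = lam * v j0 2 ∧
          v l 3 = lam * v j0 3 :=
        fun l => collinear (v j0 1) (v j0 2) (v j0 3) (v l 1) (v l 2) (v l 3)
          (hq j0) (hq l) (by linear_combination hb j0 l) hne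
      choose lam hlam using hcol
      refine ⟨w, fun l => lam l * μ, fun l => ?_, hwform⟩
      obtain ⟨e1, e2, e3⟩ := hlam l
      funext i
      fin_cases i
      · show v l 0 = (lam l * μ) • w 0
        rw [hv l, hw0]; simp
      · show v l 1 = (lam l * μ) • w 1
        rw [e1, h1]; simp; ring
      · show v l 2 = (lam l * μ) • w 2
        rw [e2, h2]; simp; ring
      · show v l 3 = (lam l * μ) • w 3
        rw [e3, h3]; simp; ring
  · rintro ⟨w, g, hg, hwform⟩ j l
    rw [bform_eq, hg j, hg l]
    simp only [Pi.smul_apply, smul_eq_mul]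
    rcases hwform with ⟨g0, rfl⟩ | rfl
    · simp only [Matrix.cons_val_zero, Matrix.cons_val_one, Matrix.head_cons,
        Matrix.cons_val_two, Matrix.tail_cons, Matrix.cons_val_three]
      linear_combination (g j * g l * (1 + g0^2)^2) * Complex.I_sq
    · simp only [Matrix.cons_val_zero, Matrix.cons_val_one, Matrix.head_cons,
        Matrix.cons_val_two, Matrix.tail_cons, Matrix.cons_val_three]
      linear_combination (g j * g l) * Complex.I_sq
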